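/- arXiv:1907.07022 — 3 statements merged into one kernel-verified Lean document; each statement's English description precedes it below -/
import Mathlib

section
/- Suppose a group G acts by isometries on a tree, and H, K are elliptic subgroups of G that commute elementwise. Then the subgroup generated by H and K is elliptic (has a global fixed point). -/
open SimpleGraph

private lemma list_map_eq_self {α : Type*} {f : α → α} (l : List α) (h : l.map f = l) :
    ∀ x ∈ l, f x = x := by
  induction l with
  | nil => simp
  | cons a t ih =>
    simp only [List.map_cons, List.cons.injEq] at h
    intro x hx
    rcases List.mem_cons.mp hx with rfl | hx
    · exact h.1
    · exact ih h.2 x hx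

private lemma dist_le_of_mem_support {V : Type*} {T : SimpleGraph V} {b y x : V}
    (p : T.Walk b y) (hx : x ∈ p.support) : T.dist b x ≤ p.length := by
  classical
  exact le_trans (SimpleGraph.dist_le (p.takeUntil x hx)) (p.length_takeUntil_le hx)

private lemma exists_shortest_path {V : Type*} {T : SimpleGraph V} (hc : T.Connected)
    (b u : V) : ∃ p : T.Walk b u, p.IsPath ∧ p.length = T.dist b u := by
  classical
  obtain ⟨p, hp⟩ := hc.exists_walk_length_eq_dist b u
  refine ⟨p.bypass, p.bypass_isPath, le_antisymm ?_ (SimpleGraph.dist_le _)⟩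
  calc p.bypass.length ≤ p.length := p.length_bypass_le
    _ = _ := hp

/-- In a tree, a vertex has at most one neighbor strictly closer to a base point `b`. -/
private lemma tree_parent_unique {V : Type*} {T : SimpleGraph V} (hT : T.IsTree)
    (b : V) {w u₁ u₂ : V} (h₁ : T.Adj u₁ w) (h₂ : T.Adj u₂ w)
    (d₁ : T.dist b u₁ + 1 = T.dist b w) (d₂ : T.dist b u₂ + 1 = T.dist b w) : u₁ = u₂ := by
  obtain ⟨p₁, hp₁, hl₁⟩ := exists_shortest_path hT.isConnected b u₁
  obtain ⟨p₂, hp₂, hl₂⟩ := exists_shortest_path hT.isConnected b u₂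
  have hw₁ : w ∉ p₁.support := fun hw => by
    have := dist_le_of_mem_support p₁ hw; omega
  have hw₂ : w ∉ p₂.support := fun hw => by
    have := dist_le_of_mem_support p₂ hw; omega
  have hP₁ : (p₁.concat h₁).IsPath := by
    rw [Walk.isPath_def, Walk.support_concat, ← List.concat_eq_append]
    exact List.Nodup.concat hw₁ hp₁.support_nodup
  have hP₂ : (p₂.concat h₂).IsPath := by
    rw [Walk.isPath_def, Walk.support_concat, ← List.concat_eq_append]
    exact List.Nodup.concat hw₂ hp₂.support_nodup
  have heq : p₁.concat h₁ = p₂.concat h₂ := (hT.existsUnique_path b w).unique hP₁ hP₂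
  have e : (p₁.concat h₁).reverse.getVert 1 = (p₂.concat h₂).reverse.getVert 1 := by
    rw [heq]
  rwa [Walk.reverse_concat, Walk.reverse_concat, Walk.getVert_cons _ _ one_ne_zero,
    Walk.getVert_cons _ _ one_ne_zero, Nat.sub_self, Walk.getVert_zero, Walk.getVert_zero] at e

/-- In a tree, distances to a base point of adjacent vertices differ by exactly one. -/
private lemma tree_adj_dist {V : Type*} {T : SimpleGraph V} (hT : T.IsTree) (b : V) {u w : V}
    (h : T.Adj u w) : T.dist b w = T.dist b u + 1 ∨ T.dist b u = T.dist b w + 1 := by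
  classical
  obtain ⟨p, hp, hl⟩ := exists_shortest_path hT.isConnected b u
  have h1 : T.dist w u ≤ 1 := by
    have := SimpleGraph.dist_le h.symm.toWalk
    simpa [Walk.length_cons, Walk.length_nil] using this
  have h1' : T.dist u w ≤ 1 := by
    have := SimpleGraph.dist_le h.toWalk
    simpa [Walk.length_cons, Walk.length_nil] using this
  have hbd₁ : T.dist b u ≤ T.dist b w + 1 := by
    have := hT.isConnected.dist_triangle (u := b) (v := w) (w := u)
    omega
  have hbd₂ : T.dist b w ≤ T.dist b u + 1 := by
    have := hT.isConnected.dist_triangle (u := b) (v := u) (w := w)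
    omega
  by_cases hw : w ∈ p.support
  · right
    have ht : T.dist b w ≤ (p.takeUntil w hw).length := SimpleGraph.dist_le _
    have hsplit := congrArg Walk.length (p.take_spec hw)
    rw [Walk.length_append] at hsplit
    have hdrop : 0 < (p.dropUntil w hw).length := by
      rcases Nat.eq_zero_or_pos (p.dropUntil w hw).length with h0 | h0
      · exact absurd (Walk.eq_of_length_eq_zero h0).symm h.ne
      · exact h0
    omega
  · left
    have hP : (p.concat h).IsPath := by
      rw [Walk.isPath_def, Walk.support_concat, ← List.concat_eq_append]
      exact List.Nodup.concat hw hp.support_nodup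
    have hne : T.dist b w ≠ T.dist b u := by
      intro he
      obtain ⟨q, hq, hlq⟩ := exists_shortest_path hT.isConnected b w
      have heq : p.concat h = q := (hT.existsUnique_path b w).unique hP hq
      have : (p.concat h).length = q.length := by rw [heq]
      rw [Walk.length_concat] at this
      omega
    have hne2 : T.dist b w + 1 ≠ T.dist b u := by
      intro he
      obtain ⟨q, hq, hlq⟩ := exists_shortest_path hT.isConnected b w
      have hu : u ∉ q.support := fun hu => by
        have := dist_le_of_mem_support q hu; omega
      have hQ : (q.concat h.symm).IsPath := by
        rw [Walk.isPath_def, Walk.support_concat, ← List.concat_eq_append]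
        exact List.Nodup.concat hu hq.support_nodup
      have heq : q.concat h.symm = p := (hT.existsUnique_path b u).unique hQ hp
      apply hw
      rw [← heq, Walk.support_concat]
      exact List.mem_append_left _ q.end_mem_support
    omega

/-- In a tree, a path whose first step increases distance to `b` keeps increasing it. -/
private lemma tree_ascent {V : Type*} {T : SimpleGraph V} (hT : T.IsTree) (b : V) :
    ∀ {w v' : V} (q : T.Walk w v'), q.IsPath →
      ∀ v, T.Adj v w → T.dist b v + 1 = T.dist b w → v ∉ q.support →
        T.dist b w ≤ T.dist b v' := by
  intro w v' q
  induction q with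
  | nil => intro _ v _ _ _; exact le_refl _
  | @cons w w₂ v'' hadj q₂ ih =>
    intro hq v hvw hd hvs
    have hq₂ : q₂.IsPath := ((Walk.cons_isPath_iff _ _).mp hq).1
    have hws : w ∉ q₂.support := ((Walk.cons_isPath_iff _ _).mp hq).2
    rcases tree_adj_dist hT b hadj with hup | hdown
    · have := ih hq₂ w hadj hup.symm hws
      omega
    · exfalso
      have hveq : v = w₂ := tree_parent_unique hT b hvw hadj.symm hd (by omega)
      apply hvs
      rw [Walk.support_cons, hveq]
      exact List.mem_cons_of_mem _ q₂.start_mem_support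

/-- Two commuting elliptic subgroups of a group acting on a tree generate an elliptic
subgroup. -/
theorem stmt_2 {V : Type*} (T : SimpleGraph V) (hT : T.IsTree)
    {G : Type*} [Group G] [MulAction G V]
    (hadj : ∀ (g : G) (u v : V), T.Adj u v → T.Adj (g • u) (g • v))
    (H K : Subgroup G)
    (hcomm : ∀ h ∈ H, ∀ k ∈ K, h * k = k * h)
    (hH : ∃ v : V, ∀ h ∈ H, h • v = v)
    (hK : ∃ v : V, ∀ k ∈ K, k • v = v) :
    ∃ v : V, ∀ g ∈ H ⊔ K, g • v = v := by
  classical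
  obtain ⟨a, ha⟩ := hH
  obtain ⟨b, hb⟩ := hK
  -- the action is by isometries
  have hdist_le : ∀ (g : G) (u v : V), T.dist (g • u) (g • v) ≤ T.dist u v := by
    intro g u v
    obtain ⟨p, hl⟩ := hT.isConnected.exists_walk_length_eq_dist u v
    have := SimpleGraph.dist_le (p.map ⟨fun x => g • x, fun h => hadj g _ _ h⟩)
    rwa [Walk.length_map, hl] at this
  have hdist : ∀ (g : G) (u v : V), T.dist (g • u) (g • v) = T.dist u v := by
    intro g u v
    refine le_antisymm (hdist_le g u v) ?_
    have := hdist_le g⁻¹ (g • u) (g • v)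
    simpa using this
  -- elements fixing the endpoints of a path fix the whole path
  have hfix : ∀ (g : G) {u v : V} (p : T.Walk u v), p.IsPath → g • u = u → g • v = v →
      ∀ x ∈ p.support, g • x = x := by
    intro g u v p hp hu hv
    have hinj : Function.Injective (fun x : V => g • x) := fun x y hxy => by
      simpa using congrArg (fun z => g⁻¹ • z) hxy
    have hq : (((p.map ⟨fun x => g • x, fun h => hadj g _ _ h⟩).copy hu hv)).IsPath :=
      (Walk.isPath_copy _ hu hv).mpr (Walk.map_isPath_of_injective hinj hp)
    have heq := (hT.existsUnique_path u v).unique hq hp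
    have hsup := congrArg Walk.support heq
    rw [Walk.support_copy, Walk.support_map] at hsup
    exact list_map_eq_self _ hsup
  -- the fixed-point set of H
  set S : Set V := {x | ∀ h ∈ H, h • x = x} with hS
  have haS : a ∈ S := ha
  have hSne : ∃ n, ∃ x ∈ S, T.dist b x = n := ⟨_, a, haS, rfl⟩
  obtain ⟨v, hvS, hvd⟩ := Nat.find_spec hSne
  set d := Nat.find hSne with hd
  have hmin : ∀ x ∈ S, d ≤ T.dist b x := fun x hx => Nat.find_min' hSne ⟨x, hx, rfl⟩
  -- every element of K fixes v
  have hkv : ∀ k ∈ K, k • v = v := by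
    intro k hk
    have hv'S : (k • v) ∈ S := by
      intro h hh
      calc h • k • v = (h * k) • v := (mul_smul _ _ _).symm
        _ = (k * h) • v := by rw [hcomm h hh k hk]
        _ = k • (h • v) := mul_smul _ _ _
        _ = k • v := by rw [hvS h hh]
    have hb' : (k⁻¹ : G) • b = b := hb k⁻¹ (inv_mem hk)
    have hdv' : T.dist b (k • v) = d := by
      calc T.dist b (k • v) = T.dist (k • ((k⁻¹ : G) • b)) (k • v) := by
            rw [smul_inv_smul]
        _ = T.dist ((k⁻¹ : G) • b) v := hdist k _ _
        _ = T.dist b v := by rw [hb']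
        _ = d := hvd
    by_contra hne
    have hne' : v ≠ k • v := fun e => hne e.symm
    obtain ⟨q0, hq0, _⟩ := exists_shortest_path hT.isConnected v (k • v)
    obtain ⟨w, hvw, q₂, hq0eq⟩ := Walk.exists_eq_cons_of_ne hne' q0
    subst hq0eq
    have hq₂ : q₂.IsPath := ((Walk.cons_isPath_iff _ _).mp hq0).1
    have hvns : v ∉ q₂.support := ((Walk.cons_isPath_iff _ _).mp hq0).2
    -- every vertex of the path lies in S
    have hsupS : ∀ x ∈ (Walk.cons hvw q₂).support, x ∈ S := by
      intro x hx h hh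
      exact hfix h _ hq0 (hvS h hh) (hv'S h hh) x hx
    have hwS : w ∈ S := by
      apply hsupS
      rw [Walk.support_cons]
      exact List.mem_cons_of_mem _ q₂.start_mem_support
    have hwd : T.dist b w = d + 1 := by
      rcases tree_adj_dist hT b hvw with h1 | h1
      · omega
      · have := hmin w hwS
        omega
    have hasc := tree_ascent hT b q₂ hq₂ v hvw (by omega) hvns
    have := hmin (k • v) hv'S
    omega
  refine ⟨v, ?_⟩
  intro g hg
  have hle : H ⊔ K ≤ MulAction.stabilizer G v :=
    sup_le (fun h hh => MulAction.mem_stabilizer_iff.mpr (hvS h hh))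
      (fun k hk => MulAction.mem_stabilizer_iff.mpr (hkv k hk))
  exact hle hg
end

section
/- Suppose a group G acts on a tree, H_1 and H_2 are elliptic subgroups of G, and g ∈ G is such that H_1 has a common fixed point with each of H_1^g and H_2^g, and H_2 has a common fixed point with each of H_1^g and H_2^g. Then H_1 and H_2 have a common fixed point. -/
open SimpleGraph Walk

section aux
variable {V : Type*} {T : SimpleGraph V}

private lemma list_map_fix {α : Type*} {f : α → α} :
    ∀ {l : List α}, l.map f = l → ∀ x ∈ l, f x = x := by
  intro l
  induction l with
  | nil => simp
  | cons a t ih =>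
      intro h x hx
      simp only [List.map_cons, List.cons.injEq] at h
      rcases List.mem_cons.mp hx with hx | hx
      · exact hx ▸ h.1
      · exact ih h.2 x hx

/-- The unique path's support is contained in any walk's support. -/
private lemma path_support_min (hT : T.IsTree) {u v : V} (p : T.Walk u v) (hp : p.IsPath)
    (w : T.Walk u v) : ∀ x ∈ p.support, x ∈ w.support := by
  haveI := Classical.decEq V
  obtain ⟨r, _, hr⟩ := hT.existsUnique_path u v
  have : p = w.bypass := (hr p hp).trans (hr w.bypass w.bypass_isPath).symm
  intro x hx
  exact w.support_bypass_subset (this ▸ hx)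

private lemma fixes_path {G : Type*} [Group G] [MulAction G V]
    (hT : T.IsTree)
    (hadj : ∀ (g : G) (u v : V), T.Adj u v → T.Adj (g • u) (g • v))
    {h : G} {u v : V} (hu : h • u = u) (hv : h • v = v)
    (p : T.Walk u v) (hp : p.IsPath) : ∀ x ∈ p.support, h • x = x := by
  let f : T →g T := ⟨fun x => h • x, fun a => hadj h _ _ a⟩
  have hinj : Function.Injective f := MulAction.injective h
  have hmp : ((p.map f).copy hu hv).IsPath :=
    (isPath_copy _ hu hv).mpr (Walk.map_isPath_of_injective hinj hp)
  obtain ⟨q, _, hq⟩ := hT.existsUnique_path u v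
  have heq : (p.map f).copy hu hv = p := (hq _ hmp).trans (hq p hp).symm
  have hsup : p.support.map (fun x => h • x) = p.support := by
    have := congrArg Walk.support heq
    rwa [support_copy, Walk.support_map] at this
  exact list_map_fix hsup

private lemma exists_AB_edge {A B : Set V} (hAB : ∀ x, x ∈ A → x ∈ B → False) :
    ∀ {a b : V} (w : T.Walk a b), a ∈ A → b ∈ B →
      (∀ x ∈ w.support, x ∈ A ∨ x ∈ B) →
      ∃ x y, T.Adj x y ∧ x ∈ A ∧ y ∈ B ∧ x ∈ w.support ∧ y ∈ w.support := by
  intro a b w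
  induction w with
  | nil => exact fun ha hb _ => absurd hb (fun hb => hAB _ ha hb)
  | @cons a c b hac q ih =>
      intro ha hb hall
      by_cases hc : c ∈ A
      · obtain ⟨x, y, h1, h2, h3, h4, h5⟩ :=
          ih hc hb (fun x hx => hall x (by simp [support_cons, hx]))
        exact ⟨x, y, h1, h2, h3, by simp [support_cons, h4], by simp [support_cons, h5]⟩
      · have hcB : c ∈ B := (hall c (by simp [support_cons])).resolve_left hc
        exact ⟨a, c, hac, ha, hcB, by simp [support_cons], by simp [support_cons]⟩

private lemma bridge_unique (hT : T.IsTree) {A B : Set V}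
    (hAB : ∀ x, x ∈ A → x ∈ B → False)
    (hApc : ∀ ⦃u v : V⦄, u ∈ A → v ∈ A → ∀ (p : T.Walk u v), p.IsPath → ∀ x ∈ p.support, x ∈ A)
    (hBpc : ∀ ⦃u v : V⦄, u ∈ B → v ∈ B → ∀ (p : T.Walk u v), p.IsPath → ∀ x ∈ p.support, x ∈ B)
    {x y x' y' : V} (h1 : T.Adj x y) (h2 : T.Adj x' y')
    (hx : x ∈ A) (hy : y ∈ B) (hx' : x' ∈ A) (hy' : y' ∈ B) :
    x = x' ∧ y = y' := by
  obtain ⟨pA, hpA, _⟩ := hT.existsUnique_path x x'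
  obtain ⟨pB, hpB, _⟩ := hT.existsUnique_path y y'
  have hsA : ∀ z ∈ pA.support, z ∈ A := hApc hx hx' pA hpA
  have hsB : ∀ z ∈ pB.support, z ∈ B := hBpc hy hy' pB hpB
  have hP1 : (Walk.cons h1 pB).IsPath := by
    rw [Walk.cons_isPath_iff]
    exact ⟨hpB, fun hmem => hAB x hx (hsB x hmem)⟩
  have hQ : (Walk.cons h2.symm pA.reverse).IsPath := by
    rw [Walk.cons_isPath_iff]
    refine ⟨hpA.reverse, fun hmem => ?_⟩
    rw [support_reverse, List.mem_reverse] at hmem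
    exact hAB y' (hsA y' hmem) hy'
  obtain ⟨r, _, hr⟩ := hT.existsUnique_path x y'
  have heq : Walk.cons h1 pB = (Walk.cons h2.symm pA.reverse).reverse :=
    (hr _ hP1).trans (hr _ hQ.reverse).symm
  constructor
  · -- x = x'
    have h0 : x' ∈ (Walk.cons h2.symm pA.reverse).support := by
      rw [support_cons]
      exact List.mem_cons_of_mem _ pA.reverse.start_mem_support
    have hx'mem : x' ∈ (Walk.cons h1 pB).support := by
      rw [heq, support_reverse]
      exact List.mem_reverse.mpr h0
    rw [support_cons, List.mem_cons] at hx'mem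
    rcases hx'mem with h | h
    · exact h.symm
    · exact absurd (hsB x' h) (fun hb => hAB x' hx' hb)
  · -- y = y'
    have h0 : y ∈ (Walk.cons h1 pB).support := by
      rw [support_cons]; exact List.mem_cons_of_mem _ pB.start_mem_support
    have hymem : y ∈ (Walk.cons h2.symm pA.reverse).support := by
      rw [heq, support_reverse] at h0
      exact List.mem_reverse.mp h0
    rw [support_cons, List.mem_cons] at hymem
    rcases hymem with h | h
    · exact h
    · rw [support_reverse, List.mem_reverse] at h
      exact absurd (hsA y h) (fun ha => hAB y ha hy)

end aux

/-- Suppose `G` acts on a tree, `H₁, H₂` are elliptic subgroups, and `g ∈ G` is such that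
each of `H₁, H₂` has a common fixed point with each of the conjugates `H₁^g = g⁻¹H₁g` and
`H₂^g = g⁻¹H₂g`. Then `H₁` and `H₂` have a common fixed point. -/
theorem stmt_6 {V : Type*} (T : SimpleGraph V) (hT : T.IsTree)
    {G : Type*} [Group G] [MulAction G V]
    (hadj : ∀ (g : G) (u v : V), T.Adj u v → T.Adj (g • u) (g • v))
    (H₁ H₂ : Subgroup G) (g : G)
    (hell₁ : ∃ v : V, ∀ h ∈ H₁, h • v = v)
    (hell₂ : ∃ v : V, ∀ h ∈ H₂, h • v = v)
    (h11 : ∃ v : V, (∀ h ∈ H₁, h • v = v) ∧ (∀ h ∈ H₁, (g⁻¹ * h * g) • v = v))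
    (h12 : ∃ v : V, (∀ h ∈ H₁, h • v = v) ∧ (∀ h ∈ H₂, (g⁻¹ * h * g) • v = v))
    (h21 : ∃ v : V, (∀ h ∈ H₂, h • v = v) ∧ (∀ h ∈ H₁, (g⁻¹ * h * g) • v = v))
    (h22 : ∃ v : V, (∀ h ∈ H₂, h • v = v) ∧ (∀ h ∈ H₂, (g⁻¹ * h * g) • v = v)) :
    ∃ v : V, (∀ h ∈ H₁, h • v = v) ∧ (∀ h ∈ H₂, h • v = v) := by
  classical
  set A : Set V := {v | ∀ h ∈ H₁, h • v = v} with hAdef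
  set B : Set V := {v | ∀ h ∈ H₂, h • v = v} with hBdef
  set C : Set V := {v | ∀ h ∈ H₁, (g⁻¹ * h * g) • v = v} with hCdef
  set D : Set V := {v | ∀ h ∈ H₂, (g⁻¹ * h * g) • v = v} with hDdef
  obtain ⟨a1, ha1A, ha1C⟩ := h11
  obtain ⟨a2, ha2A, ha2D⟩ := h12
  obtain ⟨b1, hb1B, hb1C⟩ := h21
  obtain ⟨b2, hb2B, hb2D⟩ := h22
  -- translating a point of C ∩ D into the conclusion
  have key : ∀ v : V, v ∈ C → v ∈ D → ∃ v : V, (∀ h ∈ H₁, h • v = v) ∧ (∀ h ∈ H₂, h • v = v) := by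
    intro v hvC hvD
    refine ⟨g • v, fun h hh => ?_, fun h hh => ?_⟩
    · have := hvC h hh
      calc h • g • v = g • (g⁻¹ * h * g) • v := by
              rw [← mul_smul, ← mul_smul]; congr 1; group
        _ = g • v := by rw [this]
    · have := hvD h hh
      calc h • g • v = g • (g⁻¹ * h * g) • v := by
              rw [← mul_smul, ← mul_smul]; congr 1; group
        _ = g • v := by rw [this]
  by_cases hABn : ∃ v, v ∈ A ∧ v ∈ B
  · obtain ⟨v, hvA, hvB⟩ := hABn
    exact ⟨v, hvA, hvB⟩
  have hAB : ∀ x, x ∈ A → x ∈ B → False := fun x hx hy => hABn ⟨x, hx, hy⟩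
  -- path-closedness of the four sets
  have hApc : ∀ ⦃u v : V⦄, u ∈ A → v ∈ A → ∀ (p : T.Walk u v), p.IsPath → ∀ x ∈ p.support, x ∈ A :=
    fun u v hu hv p hp x hx h hh => fixes_path hT hadj (hu h hh) (hv h hh) p hp x hx
  have hBpc : ∀ ⦃u v : V⦄, u ∈ B → v ∈ B → ∀ (p : T.Walk u v), p.IsPath → ∀ x ∈ p.support, x ∈ B :=
    fun u v hu hv p hp x hx h hh => fixes_path hT hadj (hu h hh) (hv h hh) p hp x hx
  have hCpc : ∀ ⦃u v : V⦄, u ∈ C → v ∈ C → ∀ (p : T.Walk u v), p.IsPath → ∀ x ∈ p.support, x ∈ C :=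
    fun u v hu hv p hp x hx h hh => fixes_path hT hadj (hu h hh) (hv h hh) p hp x hx
  have hDpc : ∀ ⦃u v : V⦄, u ∈ D → v ∈ D → ∀ (p : T.Walk u v), p.IsPath → ∀ x ∈ p.support, x ∈ D :=
    fun u v hu hv p hp x hx h hh => fixes_path hT hadj (hu h hh) (hv h hh) p hp x hx
  -- the path p from a1 to b1 lies in C
  obtain ⟨p, hp, _⟩ := hT.existsUnique_path a1 b1
  have hpC : ∀ x ∈ p.support, x ∈ C := hCpc ha1C hb1C p hp
  -- cover of p by A ∪ D ∪ B
  obtain ⟨w1, hw1, _⟩ := hT.existsUnique_path a1 a2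
  obtain ⟨w2, hw2, _⟩ := hT.existsUnique_path a2 b2
  obtain ⟨w3, hw3, _⟩ := hT.existsUnique_path b2 b1
  have hcovp : ∀ x ∈ p.support, x ∈ A ∨ x ∈ D ∨ x ∈ B := by
    intro x hx
    have hx' : x ∈ (w1.append (w2.append w3)).support :=
      path_support_min hT p hp _ x hx
    rw [Walk.mem_support_append_iff, Walk.mem_support_append_iff] at hx'
    rcases hx' with h | h | h
    · exact Or.inl (hApc ha1A ha2A w1 hw1 x h)
    · exact Or.inr (Or.inl (hDpc ha2D hb2D w2 hw2 x h))
    · exact Or.inr (Or.inr (hBpc hb2B hb1B w3 hw3 x h))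
  by_cases hpD : ∃ x ∈ p.support, x ∈ D
  · obtain ⟨x, hx, hxD⟩ := hpD
    exact key x (hpC x hx) hxD
  have hcovp' : ∀ x ∈ p.support, x ∈ A ∨ x ∈ B := by
    intro x hx
    rcases hcovp x hx with h | h | h
    · exact Or.inl h
    · exact absurd ⟨x, hx, h⟩ hpD
    · exact Or.inr h
  obtain ⟨x, y, hxy, hxA, hyB, hxp, hyp⟩ := exists_AB_edge hAB p ha1A hb1B hcovp'
  -- the path q from a2 to b2 lies in D
  have hqD : ∀ x ∈ w2.support, x ∈ D := hDpc ha2D hb2D w2 hw2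
  obtain ⟨u1, hu1, _⟩ := hT.existsUnique_path a2 a1
  obtain ⟨u3, hu3, _⟩ := hT.existsUnique_path b1 b2
  have hcovq : ∀ x ∈ w2.support, x ∈ A ∨ x ∈ C ∨ x ∈ B := by
    intro x hx
    have hx' : x ∈ (u1.append (p.append u3)).support :=
      path_support_min hT w2 hw2 _ x hx
    rw [Walk.mem_support_append_iff, Walk.mem_support_append_iff] at hx'
    rcases hx' with h | h | h
    · exact Or.inl (hApc ha2A ha1A u1 hu1 x h)
    · exact Or.inr (Or.inl (hpC x h))
    · exact Or.inr (Or.inr (hBpc hb1B hb2B u3 hu3 x h))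
  by_cases hqC : ∃ x ∈ w2.support, x ∈ C
  · obtain ⟨x, hx, hxC⟩ := hqC
    exact key x hxC (hqD x hx)
  have hcovq' : ∀ x ∈ w2.support, x ∈ A ∨ x ∈ B := by
    intro x hx
    rcases hcovq x hx with h | h | h
    · exact Or.inl h
    · exact absurd ⟨x, hx, h⟩ hqC
    · exact Or.inr h
  obtain ⟨x', y', hxy', hxA', hyB', hxq, hyq⟩ := exists_AB_edge hAB w2 ha2A hb2B hcovq'
  obtain ⟨hxx, hyy⟩ := bridge_unique hT hAB hApc hBpc hxy hxy' hxA hyB hxA' hyB'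
  exact key x (hpC x hxp) (hxx ▸ hqD x' hxq)
end

section
/- Let h_1, h_2 be elliptic isometries of a tree whose fixed point sets are non-empty and disjoint. Then the product h_1 h_2 is a hyperbolic isometry with translation length 2·d(Fix(h_1), Fix(h_2)), and its axis contains the bridge between Fix(h_1) and Fix(h_2). -/
/-- `w` lies on the geodesic between `u` and `v` (w.r.t. the edge-path metric). -/
def OnGeod {V : Type*} (T : SimpleGraph V) (u w v : V) : Prop :=
  T.dist u w + T.dist w v = T.dist u v

/-- The distance between two sets of vertices. -/
noncomputable def setDist {V : Type*} (T : SimpleGraph V) (A B : Set V) : ℕ :=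
  sInf {n : ℕ | ∃ a ∈ A, ∃ b ∈ B, T.dist a b = n}

/-- The translation length of `g`: the infimum of `d(x, g • x)`. -/
noncomputable def translationLength {V : Type*} (T : SimpleGraph V)
    {G : Type*} [Group G] [MulAction G V] (g : G) : ℕ :=
  sInf (Set.range fun x : V => T.dist x (g • x))

namespace Stmt13Aux

open SimpleGraph Walk

variable {V : Type*} {T : SimpleGraph V}

/-- In a tree, every path realises the distance between its endpoints. -/
lemma path_length (hT : T.IsTree) {u v : V} {p : T.Walk u v} (hp : p.IsPath) :
    p.length = T.dist u v := by
  obtain ⟨q, hq, hql⟩ := hT.isConnected.exists_path_of_dist u v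
  rw [(hT.existsUnique_path u v).unique hp hq, hql]

lemma onGeod_of_mem_support (hT : T.IsTree) {u v w : V} {p : T.Walk u v} (hp : p.IsPath)
    (hw : w ∈ p.support) : OnGeod T u w v := by
  classical
  have h1 : (p.takeUntil w hw).length = T.dist u w := path_length hT (hp.takeUntil hw)
  have h2 : (p.dropUntil w hw).length = T.dist w v := path_length hT (hp.dropUntil hw)
  have h3 := congrArg Walk.length (p.take_spec hw)
  rw [Walk.length_append, h1, h2, path_length hT hp] at h3
  exact h3

lemma mem_support_of_onGeod (hT : T.IsTree) {u v w : V} {p : T.Walk u v} (hp : p.IsPath)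
    (hw : OnGeod T u w v) : w ∈ p.support := by
  obtain ⟨p₁, hp₁, hl₁⟩ := hT.isConnected.exists_path_of_dist u w
  obtain ⟨p₂, hp₂, hl₂⟩ := hT.isConnected.exists_path_of_dist w v
  have hq : (p₁.append p₂).IsPath := by
    apply Walk.isPath_of_length_eq_dist
    rw [Walk.length_append, hl₁, hl₂, hw]
  have := (hT.existsUnique_path u v).unique hp hq
  rw [this, Walk.mem_support_append_iff]
  exact Or.inr p₂.start_mem_support

lemma onGeod_symm {u v w : V} (h : OnGeod T u w v) : OnGeod T v w u := by
  unfold OnGeod at *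
  rw [SimpleGraph.dist_comm (u := v) (v := w), SimpleGraph.dist_comm (u := w) (v := u),
    SimpleGraph.dist_comm (u := v) (v := u)]
  omega

lemma onGeod_left (u v : V) : OnGeod T u u v := by
  unfold OnGeod; rw [SimpleGraph.dist_self]; omega

lemma onGeod_trans (hT : T.IsTree) {y p m z : V} (h1 : OnGeod T y p m) (h2 : OnGeod T y m z) :
    OnGeod T y p z := by
  unfold OnGeod at *
  have t1 : T.dist p z ≤ T.dist p m + T.dist m z := hT.isConnected.dist_triangle
  have t2 : T.dist y z ≤ T.dist y p + T.dist p z := hT.isConnected.dist_triangle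
  omega

lemma onGeod_comparable (hT : T.IsTree) {y x p q : V} (hp : OnGeod T y p x)
    (hq : OnGeod T y q x) (hle : T.dist y p ≤ T.dist y q) : OnGeod T y p q := by
  classical
  obtain ⟨P, hP, -⟩ := hT.isConnected.exists_path_of_dist y x
  have hps := mem_support_of_onGeod hT hP hp
  have hqs := mem_support_of_onGeod hT hP hq
  rw [← P.take_spec hqs, Walk.mem_support_append_iff] at hps
  rcases hps with hps | hps
  · exact onGeod_of_mem_support hT (hP.takeUntil hqs) hps
  · have h1 : OnGeod T q p x := onGeod_of_mem_support hT (hP.dropUntil hqs) hps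
    have h2 : T.dist p q = 0 := by
      unfold OnGeod at *
      have := SimpleGraph.dist_comm (G := T) (u := q) (v := p)
      omega
    have : p = q := (hT.isConnected.dist_eq_zero_iff).mp h2
    subst this
    unfold OnGeod; rw [SimpleGraph.dist_self]; omega

lemma onGeod_unique (hT : T.IsTree) {y x p q : V} (hp : OnGeod T y p x)
    (hq : OnGeod T y q x) (heq : T.dist y p = T.dist y q) : p = q := by
  have h1 := onGeod_comparable hT hp hq heq.le
  unfold OnGeod at h1
  have : T.dist p q = 0 := by omega
  exact hT.isConnected.dist_eq_zero_iff.mp this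

/-- Paths meeting only at their common endpoint concatenate to a path. -/
lemma append_isPath {u v w : V} {p : T.Walk u v} {q : T.Walk v w} (hp : p.IsPath)
    (hq : q.IsPath) (hint : ∀ x, x ∈ p.support → x ∈ q.support → x = v) :
    (p.append q).IsPath := by
  rw [Walk.isPath_def, Walk.support_append]
  apply List.Nodup.append hp.support_nodup
  · have := hq.support_nodup
    rw [q.support_eq_cons] at this
    exact this.of_cons
  · intro x hx hx'
    have hxv : x = v := hint x hx (List.mem_of_mem_tail hx')
    subst hxv
    have := hq.support_nodup
    rw [q.support_eq_cons] at this
    exact (List.nodup_cons.mp this).1 hx'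

/-- The median lemma: for any `y x z` there is `m` on `[y,x] ∩ [y,z]` with
`d(x,z) = d(x,m) + d(m,z)`. -/
lemma median (hT : T.IsTree) (y x z : V) :
    ∃ m, OnGeod T y m x ∧ OnGeod T y m z ∧
      T.dist x z + 2 * T.dist y m = T.dist x y + T.dist y z := by
  classical
  obtain ⟨P, hP, -⟩ := hT.isConnected.exists_path_of_dist y x
  obtain ⟨Q, hQ, -⟩ := hT.isConnected.exists_path_of_dist y z
  have hyS : y ∈ P.support.toFinset ∩ Q.support.toFinset := by
    simp only [Finset.mem_inter, List.mem_toFinset]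
    exact ⟨P.start_mem_support, Q.start_mem_support⟩
  obtain ⟨m, hmS, hmax⟩ :=
    Finset.exists_max_image (P.support.toFinset ∩ Q.support.toFinset) (T.dist y) ⟨y, hyS⟩
  simp only [Finset.mem_inter, List.mem_toFinset] at hmS
  obtain ⟨hmP, hmQ⟩ := hmS
  have h1 : OnGeod T y m x := onGeod_of_mem_support hT hP hmP
  have h2 : OnGeod T y m z := onGeod_of_mem_support hT hQ hmQ
  refine ⟨m, h1, h2, ?_⟩
  set P₂ := P.dropUntil m hmP with hP₂def
  set Q₂ := Q.dropUntil m hmQ with hQ₂def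
  have hP₂ : P₂.IsPath := hP.dropUntil hmP
  have hQ₂ : Q₂.IsPath := hQ.dropUntil hmQ
  have key : ∀ c, c ∈ P₂.support → c ∈ Q₂.support → c = m := by
    intro c hc1 hc2
    by_contra hcm
    have hcP : c ∈ P.support := P.support_dropUntil_subset hmP hc1
    have hcQ : c ∈ Q.support := Q.support_dropUntil_subset hmQ hc2
    have hcmax : T.dist y c ≤ T.dist y m := by
      apply hmax
      simp only [Finset.mem_inter, List.mem_toFinset]
      exact ⟨hcP, hcQ⟩
    have h3 : OnGeod T m c x := onGeod_of_mem_support hT hP₂ hc1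
    have h4 : T.dist y c = T.dist y m + T.dist m c := by
      have t1 : T.dist y c ≤ T.dist y m + T.dist m c := hT.isConnected.dist_triangle
      have t2 : T.dist y x ≤ T.dist y c + T.dist c x := hT.isConnected.dist_triangle
      unfold OnGeod at h1 h3
      omega
    have : T.dist m c = 0 := by omega
    exact hcm (hT.isConnected.dist_eq_zero_iff.mp this).symm
  have hR : (P₂.reverse.append Q₂).IsPath := by
    apply append_isPath hP₂.reverse hQ₂
    intro c hc1 hc2
    rw [Walk.support_reverse, List.mem_reverse] at hc1
    exact key c hc1 hc2
  have hRl := path_length hT hR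
  rw [Walk.length_append, Walk.length_reverse, path_length hT hP₂, path_length hT hQ₂] at hRl
  unfold OnGeod at h1 h2
  have c1 : T.dist x y = T.dist y x := SimpleGraph.dist_comm
  have c2 : T.dist x m = T.dist m x := SimpleGraph.dist_comm
  omega

section Action

variable {G : Type*} [Group G] [MulAction G V]

/-- The graph homomorphism given by the action of `g`. -/
def homOf (hadj : ∀ (g : G) (u v : V), T.Adj u v → T.Adj (g • u) (g • v)) (g : G) :
    T →g T where
  toFun := (g • ·)
  map_rel' := fun h => hadj g _ _ h

@[simp] lemma homOf_apply (hadj : ∀ (g : G) (u v : V), T.Adj u v → T.Adj (g • u) (g • v))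
    (g : G) (x : V) : homOf hadj g x = g • x := rfl

lemma dist_smul_le (hT : T.IsTree)
    (hadj : ∀ (g : G) (u v : V), T.Adj u v → T.Adj (g • u) (g • v)) (g : G) (u v : V) :
    T.dist (g • u) (g • v) ≤ T.dist u v := by
  obtain ⟨p, -, hl⟩ := hT.isConnected.exists_path_of_dist u v
  calc T.dist (g • u) (g • v) ≤ (p.map (homOf hadj g)).length := SimpleGraph.dist_le _
  _ = p.length := Walk.length_map _ p
  _ = T.dist u v := hl

lemma dist_smul (hT : T.IsTree)
    (hadj : ∀ (g : G) (u v : V), T.Adj u v → T.Adj (g • u) (g • v)) (g : G) (u v : V) :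
    T.dist (g • u) (g • v) = T.dist u v := by
  refine le_antisymm (dist_smul_le hT hadj g u v) ?_
  have := dist_smul_le hT hadj g⁻¹ (g • u) (g • v)
  simpa using this

lemma onGeod_smul (hT : T.IsTree)
    (hadj : ∀ (g : G) (u v : V), T.Adj u v → T.Adj (g • u) (g • v)) (g : G) {u w v : V}
    (h : OnGeod T u w v) : OnGeod T (g • u) (g • w) (g • v) := by
  unfold OnGeod at *
  rw [dist_smul hT hadj, dist_smul hT hadj, dist_smul hT hadj]
  exact h

lemma list_map_eq_self {α : Type*} {f : α → α} :
    ∀ {l : List α}, l.map f = l → ∀ x ∈ l, f x = x := by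
  intro l
  induction l with
  | nil => simp
  | cons a t ih =>
    intro h x hx
    rw [List.map_cons, List.cons.injEq] at h
    rw [List.mem_cons] at hx
    rcases hx with rfl | hx
    · exact h.1
    · exact ih h.2 x hx

/-- Fixed-point sets are convex: a point on a geodesic between fixed points is fixed. -/
lemma fix_onGeod (hT : T.IsTree)
    (hadj : ∀ (g : G) (u v : V), T.Adj u v → T.Adj (g • u) (g • v)) {h : G} {a b w : V}
    (ha : h • a = a) (hb : h • b = b) (hw : OnGeod T a w b) : h • w = w := by
  obtain ⟨P, hP, -⟩ := hT.isConnected.exists_path_of_dist a b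
  have hinj : Function.Injective (⇑(homOf hadj h)) := MulAction.injective h
  have hQpath : ((P.map (homOf hadj h)).copy ha hb).IsPath := by
    refine (Walk.isPath_copy _ _ _).mpr ?_
    exact SimpleGraph.Walk.map_isPath_of_injective hinj hP
  have hPQ : P = (P.map (homOf hadj h)).copy ha hb :=
    (hT.existsUnique_path a b).unique hP hQpath
  have hsupp : P.support.map (h • ·) = P.support := by
    conv_rhs => rw [hPQ]
    rw [show ((P.map (homOf hadj h)).copy ha hb).support = (P.map (homOf hadj h)).support from
      Walk.support_copy _ _ _, Walk.support_map]
    rfl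
  exact list_map_eq_self hsupp w (mem_support_of_onGeod hT hP hw)

/-- The midpoint of `[x, h•x]` is a fixed point of `h`, for `h` elliptic. -/
lemma midpoint (hT : T.IsTree)
    (hadj : ∀ (g : G) (u v : V), T.Adj u v → T.Adj (g • u) (g • v)) {h : G} {b0 : V}
    (hb0 : h • b0 = b0) (x : V) :
    ∃ m, h • m = m ∧ OnGeod T x m (h • x) ∧ T.dist x (h • x) = 2 * T.dist x m ∧
      T.dist x m = T.dist m (h • x) := by
  obtain ⟨m, h1, h2, h3⟩ := median hT b0 x (h • x)
  have hd : T.dist b0 (h • x) = T.dist b0 x := by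
    conv_lhs => rw [← hb0]
    exact dist_smul hT hadj h b0 x
  have hfix : h • m = m := by
    have h1' : OnGeod T b0 (h • m) (h • x) := by
      have := onGeod_smul hT hadj h h1
      rwa [hb0] at this
    have hdm : T.dist b0 (h • m) = T.dist b0 m := by
      conv_lhs => rw [← hb0]
      exact dist_smul hT hadj h b0 m
    exact onGeod_unique hT h1' h2 hdm
  refine ⟨m, hfix, ?_, ?_, ?_⟩ <;>
  · unfold OnGeod at *
    rw [SimpleGraph.dist_comm (u := x) (v := b0)] at *
    rw [SimpleGraph.dist_comm (u := x) (v := m)] at *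
    omega

end Action

end Stmt13Aux

/-- If `h₁, h₂` are elliptic with disjoint (non-empty) fixed point sets, then `h₁h₂` is
hyperbolic (fixes no point), has translation length `2·d(Fix h₁, Fix h₂)`, and its axis
contains the bridge between the fixed point sets: every point on a geodesic realising the
distance between `Fix h₁` and `Fix h₂` is moved exactly the translation length. -/
theorem stmt_13 {V : Type*} (T : SimpleGraph V) (hT : T.IsTree)
    {G : Type*} [Group G] [MulAction G V]
    (hadj : ∀ (g : G) (u v : V), T.Adj u v → T.Adj (g • u) (g • v))
    (h₁ h₂ : G)
    (hne₁ : {x : V | h₁ • x = x}.Nonempty) (hne₂ : {x : V | h₂ • x = x}.Nonempty)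
    (hdisj : {x : V | h₁ • x = x} ∩ {x : V | h₂ • x = x} = ∅) :
    (∀ x : V, (h₁ * h₂) • x ≠ x) ∧
    translationLength T (h₁ * h₂) =
      2 * setDist T {x : V | h₁ • x = x} {x : V | h₂ • x = x} ∧
    (∀ w : V,
      (∃ a ∈ {x : V | h₁ • x = x}, ∃ b ∈ {x : V | h₂ • x = x},
        T.dist a b = setDist T {x : V | h₁ • x = x} {x : V | h₂ • x = x} ∧
        OnGeod T a w b) →
      T.dist w ((h₁ * h₂) • w) = translationLength T (h₁ * h₂)) := by
  classical
  open Stmt13Aux in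
  set A : Set V := {x : V | h₁ • x = x} with hA
  set B : Set V := {x : V | h₂ • x = x} with hB
  set Δ : ℕ := setDist T A B with hΔ
  -- the infimum is attained
  have hSne : {n : ℕ | ∃ a ∈ A, ∃ b ∈ B, T.dist a b = n}.Nonempty := by
    obtain ⟨a0, ha0⟩ := hne₁; obtain ⟨b0, hb0⟩ := hne₂
    exact ⟨T.dist a0 b0, a0, ha0, b0, hb0, rfl⟩
  have hΔmem : ∃ a ∈ A, ∃ b ∈ B, T.dist a b = Δ := Nat.sInf_mem hSne
  obtain ⟨a, haA, b, hbB, hab⟩ := hΔmem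
  have hmin : ∀ a' ∈ A, ∀ b' ∈ B, Δ ≤ T.dist a' b' := by
    intro a' ha' b' hb'
    exact Nat.sInf_le ⟨a', ha', b', hb', rfl⟩
  have hΔpos : 0 < Δ := by
    rcases Nat.eq_zero_or_pos Δ with h0 | h; swap
    · exact h
    · exfalso
      rw [h0] at hab
      have : a = b := hT.isConnected.dist_eq_zero_iff.mp hab
      subst this
      have : a ∈ A ∩ B := ⟨haA, hbB⟩
      rw [hdisj] at this
      exact this
  -- lower bound: every point is moved at least 2Δ
  have lower : ∀ x : V, 2 * Δ ≤ T.dist x ((h₁ * h₂) • x) := by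
    intro x
    rw [mul_smul]
    set y := h₂ • x with hy
    set z := h₁ • y with hz
    obtain ⟨m₂, hm₂fix, hm₂g, hm₂d, hm₂e⟩ := Stmt13Aux.midpoint hT hadj hbB x
    obtain ⟨m₁, hm₁fix, hm₁g, hm₁d, hm₁e⟩ := Stmt13Aux.midpoint hT hadj haA y
    rw [← hy] at hm₂g hm₂d hm₂e
    rw [← hz] at hm₁g hm₁d hm₁e
    obtain ⟨m, hmx, hmz, hmed⟩ := Stmt13Aux.median hT y x z
    have hΔ12 : Δ ≤ T.dist m₁ m₂ := hmin m₁ hm₁fix m₂ hm₂fix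
    have hm₂x : OnGeod T y m₂ x := Stmt13Aux.onGeod_symm hm₂g
    -- distances from y
    have e1 : T.dist y m₂ + T.dist m₂ x = T.dist y x := hm₂x
    have e2 : T.dist y m₁ + T.dist m₁ z = T.dist y z := hm₁g
    have e3 : T.dist x z + 2 * T.dist y m = T.dist x y + T.dist y z := hmed
    have c1 : T.dist x y = T.dist y x := SimpleGraph.dist_comm
    have c2 : T.dist x m₂ = T.dist m₂ x := SimpleGraph.dist_comm
    have hyx : T.dist y x = 2 * T.dist y m₂ := by
      unfold OnGeod at hm₂g; omega
    have hyz : T.dist y z = 2 * T.dist y m₁ := by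
      unfold OnGeod at hm₁g
      have : T.dist y m₁ = T.dist m₁ z := hm₁e
      omega
    have hmyx : T.dist y m + T.dist m x = T.dist y x := hmx
    have hmyz : T.dist y m + T.dist m z = T.dist y z := hmz
    by_cases hc1 : T.dist y m ≤ T.dist y m₂
    · by_cases hc2 : T.dist y m ≤ T.dist y m₁
      · -- case A
        have hA1 : OnGeod T y m m₂ := Stmt13Aux.onGeod_comparable hT hmx hm₂x hc1
        have hA2 : OnGeod T y m m₁ := Stmt13Aux.onGeod_comparable hT hmz hm₁g hc2
        have t1 : T.dist m₁ m₂ ≤ T.dist m₁ m + T.dist m m₂ := hT.isConnected.dist_triangle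
        have c3 : T.dist m₁ m = T.dist m m₁ := SimpleGraph.dist_comm
        unfold OnGeod at hA1 hA2
        omega
      · -- case C : m₁ strictly between y and m on [y,z]
        push_neg at hc2
        have hB1 : OnGeod T y m₁ m := Stmt13Aux.onGeod_comparable hT hm₁g hmz hc2.le
        have hB2 : OnGeod T y m₁ x := Stmt13Aux.onGeod_trans hT hB1 hmx
        rcases le_total (T.dist y m₁) (T.dist y m₂) with hle | hle
        · have hcomp : OnGeod T y m₁ m₂ := Stmt13Aux.onGeod_comparable hT hB2 hm₂x hle
          unfold OnGeod at hcomp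
          omega
        · have hcomp : OnGeod T y m₂ m₁ := Stmt13Aux.onGeod_comparable hT hm₂x hB2 hle
          have c4 : T.dist m₁ m₂ = T.dist m₂ m₁ := SimpleGraph.dist_comm
          unfold OnGeod at hcomp
          omega
    · -- case B : m₂ strictly between y and m on [y,x]
      push_neg at hc1
      have hB1 : OnGeod T y m₂ m := Stmt13Aux.onGeod_comparable hT hm₂x hmx hc1.le
      have hB2 : OnGeod T y m₂ z := Stmt13Aux.onGeod_trans hT hB1 hmz
      rcases le_total (T.dist y m₁) (T.dist y m₂) with hle | hle
      · have hcomp : OnGeod T y m₁ m₂ := Stmt13Aux.onGeod_comparable hT hm₁g hB2 hle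
        unfold OnGeod at hcomp
        omega
      · have hcomp : OnGeod T y m₂ m₁ := Stmt13Aux.onGeod_comparable hT hB2 hm₁g hle
        have c4 : T.dist m₁ m₂ = T.dist m₂ m₁ := SimpleGraph.dist_comm
        unfold OnGeod at hcomp
        omega
  -- the bridge computation
  have key : ∀ a' b' w : V, a' ∈ A → b' ∈ B → T.dist a' b' = Δ → OnGeod T a' w b' →
      T.dist w ((h₁ * h₂) • w) = 2 * Δ := by
    intro a' b' w ha' hb' hab' hgeod
    have ha'fix : h₁ • a' = a' := ha'
    have hb'fix : h₂ • b' = b' := hb'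
    rw [mul_smul]
    set y := h₂ • w with hy
    set z := h₁ • y with hz
    have hinvb : h₂⁻¹ • b' = b' := by
      rw [← hb'fix, inv_smul_smul, hb'fix]
    have hinva : h₁⁻¹ • a' = a' := by
      rw [← ha'fix, inv_smul_smul, ha'fix]
    -- Step 2 : OnGeod a' b' y
    have s2a : OnGeod T a' b' y := by
      obtain ⟨m, hm1, hm2, hm3⟩ := Stmt13Aux.median hT b' a' y
      -- hm2 : OnGeod b' m y ; pull back by h₂⁻¹
      have hm2' : OnGeod T b' (h₂⁻¹ • m) w := by
        have := Stmt13Aux.onGeod_smul hT hadj h₂⁻¹ hm2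
        rwa [hinvb, hy, inv_smul_smul] at this
      have hwb : OnGeod T b' w a' := Stmt13Aux.onGeod_symm hgeod
      have hm2'' : OnGeod T b' (h₂⁻¹ • m) a' := Stmt13Aux.onGeod_trans hT hm2' hwb
      have hdm : T.dist b' (h₂⁻¹ • m) = T.dist b' m := by
        conv_lhs => rw [← hinvb]
        exact Stmt13Aux.dist_smul hT hadj h₂⁻¹ b' m
      have hmeq : m = h₂⁻¹ • m := Stmt13Aux.onGeod_unique hT hm1 hm2'' hdm.symm
      have hmfix : h₂ • m = m := by
        conv_lhs => rw [hmeq]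
        rw [smul_inv_smul]
      have hmB : m ∈ B := hmfix
      have hminm : Δ ≤ T.dist a' m := hmin a' ha' m hmB
      have hm1' : T.dist b' m + T.dist m a' = T.dist b' a' := hm1
      have cba : T.dist b' a' = T.dist a' b' := SimpleGraph.dist_comm
      have cma : T.dist m a' = T.dist a' m := SimpleGraph.dist_comm
      have hbm0 : T.dist b' m = 0 := by omega
      unfold OnGeod
      omega
    have s2b : T.dist b' y = T.dist b' w := by
      conv_lhs => rw [← hb'fix, hy]
      exact Stmt13Aux.dist_smul hT hadj h₂ b' w
    -- Step 3
    have s3a : T.dist a' z = T.dist a' y := by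
      conv_lhs => rw [← ha'fix, hz]
      exact Stmt13Aux.dist_smul hT hadj h₁ a' y
    obtain ⟨m, hm1, hm2, hm3⟩ := Stmt13Aux.median hT a' w z
    -- hm1 : OnGeod a' m w, hm2 : OnGeod a' m z
    have hmb : OnGeod T a' m b' := Stmt13Aux.onGeod_trans hT hm1 hgeod
    have hm2' : OnGeod T a' (h₁⁻¹ • m) y := by
      have := Stmt13Aux.onGeod_smul hT hadj h₁⁻¹ hm2
      rwa [hinva, hz, inv_smul_smul] at this
    have hdm : T.dist a' (h₁⁻¹ • m) = T.dist a' m := by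
      conv_lhs => rw [← hinva]
      exact Stmt13Aux.dist_smul hT hadj h₁⁻¹ a' m
    have hle : T.dist a' (h₁⁻¹ • m) ≤ T.dist a' b' := by
      rw [hdm]
      unfold OnGeod at hm1 hgeod
      omega
    have hcomp : OnGeod T a' (h₁⁻¹ • m) b' := Stmt13Aux.onGeod_comparable hT hm2' s2a hle
    have hmeq : m = h₁⁻¹ • m := Stmt13Aux.onGeod_unique hT hmb hcomp hdm.symm
    have hmfix : h₁ • m = m := by
      conv_lhs => rw [hmeq]
      rw [smul_inv_smul]
    have hmA : m ∈ A := hmfix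
    have hminm : Δ ≤ T.dist m b' := hmin m hmA b' hb'
    have ham0 : T.dist a' m = 0 := by
      unfold OnGeod at hmb
      omega
    -- final arithmetic
    unfold OnGeod at s2a hgeod
    have cwa : T.dist w a' = T.dist a' w := SimpleGraph.dist_comm
    have cbw : T.dist b' w = T.dist w b' := SimpleGraph.dist_comm
    omega
  -- attained at a
  have attain : T.dist a ((h₁ * h₂) • a) = 2 * Δ :=
    key a b a haA hbB hab (Stmt13Aux.onGeod_left a b)
  have htl : translationLength T (h₁ * h₂) = 2 * Δ := by
    apply le_antisymm
    · exact Nat.sInf_le ⟨a, attain⟩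
    · show 2 * Δ ≤ sInf (Set.range fun x : V => T.dist x ((h₁ * h₂) • x))
      refine le_csInf ⟨T.dist a ((h₁ * h₂) • a), Set.mem_range_self a⟩ ?_
      rintro n ⟨x, rfl⟩
      exact lower x
  refine ⟨?_, htl, ?_⟩
  · intro x hx
    have := lower x
    rw [hx, SimpleGraph.dist_self] at this
    omega
  · rintro w ⟨a', ha', b', hb', hd, hgeod⟩
    rw [htl]
    exact key a' b' w ha' hb' hd hgeod
end
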